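/- Expire events prune over-long prefixes: if a ∈ A^var is started at step j_s and not terminated (running_a stays true) through step j with (j − j_s)·δ > ub(a), then the event (ok ∧ running_a ∧ clock_a > ub(a), {ok := false}) is applicable at step j, and in any valid plan (which requires ok in the goal and ok is monotone) every started variable-duration action must be terminated within ub(a) time of its start. -/
import Mathlib


/-- Expire events prune over-long prefixes: `a` starts at step `js`
(`clock_a = 0`) and is running through step `je` with the clock increased by
`δ` per step; the expire event (precondition `ok ∧ running_a ∧ clock_a > ub`,
effect `ok := false`) is applied during event completion, so in any
event-completed state with `running_a` and `clock_a > ub` the flag `ok` is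
false; `ok` is monotone and required at the final step `m ≥ je`. Then the
action is terminated within `ub` of its start: `je·δ - js·δ ≤ ub`. Moreover,
if additionally `lb ≤ clock_a` holds at step `je` (precondition of `ā^⊣`), the
duration lies in `[lb, ub]`. -/
theorem stmt_18 (δ ub lb : ℚ) (hδ : 0 < δ) (js je m : ℕ)
    (hle : js ≤ je) (hjm : je ≤ m)
    (clock : ℕ → ℚ) (running ok : ℕ → Prop)
    (hclock0 : clock js = 0)
    (hrun : ∀ j, js ≤ j → j ≤ je → running j)
    (hstep : ∀ j, js ≤ j → j < je → clock (j + 1) = clock j + δ)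
    (hexpire : ∀ j, running j → clock j > ub → ¬ ok j)
    (hmono : ∀ j, ¬ ok j → ¬ ok (j + 1))
    (hfinal : ok m) :
    (je : ℚ) * δ - (js : ℚ) * δ ≤ ub ∧
    (lb ≤ clock je →
      lb ≤ (je : ℚ) * δ - (js : ℚ) * δ ∧ (je : ℚ) * δ - (js : ℚ) * δ ≤ ub) := by
  -- clock value at any j between js and je
  have hclock : ∀ j, js ≤ j → j ≤ je → clock j = ((j : ℚ) - (js : ℚ)) * δ := by
    intro j hj hj'
    induction j with
    | zero =>
      have h0 : js = 0 := Nat.le_zero.mp hj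
      subst h0
      simpa using hclock0
    | succ n ih =>
      rcases Nat.lt_or_ge js (n + 1) with h | h
      · have hn : js ≤ n := Nat.lt_succ_iff.mp h
        have hn' : n < je := Nat.lt_of_lt_of_le (Nat.lt_succ_self n) hj'
        have := hstep n hn hn'
        rw [this, ih hn (Nat.le_of_lt hn')]
        push_cast
        ring
      · have h1 : js = n + 1 := Nat.le_antisymm hj h
        subst h1
        simpa using hclock0
  have hce : clock je = ((je : ℚ) - (js : ℚ)) * δ := hclock je hle le_rfl
  -- not (clock je > ub): else ok fails forever
  have hub : clock je ≤ ub := by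
    by_contra h
    push_neg at h
    have hne : ¬ ok je := hexpire je (hrun je hle le_rfl) h
    have : ∀ k, ¬ ok (je + k) := by
      intro k
      induction k with
      | zero => simpa using hne
      | succ n ih => exact hmono _ ih
    have := this (m - je)
    rw [Nat.add_sub_cancel' hjm] at this
    exact this hfinal
  have key : (je : ℚ) * δ - (js : ℚ) * δ ≤ ub := by
    have := hub
    rw [hce] at this
    linarith [this]
  refine ⟨key, fun hlb => ⟨?_, key⟩⟩
  rw [hce] at hlb
  linarith
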